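/- Let B : X → ℝ be continuous and bounded above with 𝓛_B(1) = 1, and let μ be a T-invariant Borel probability measure on X with B μ-integrable such that the duality ∫ 𝓛_B(φ) dμ = ∫ φ dμ holds for every continuous φ : X → [−∞, ∞) for which both sides are defined in [−∞, ∞) (in particular 𝓛_B^* μ = μ). Then h_ν(μ) = −∫ B dμ. -/

import Mathlib

open MeasureTheory Real Filter

private lemma aux_exp1 (t : ℝ) : Real.exp t * (1 - t) ≤ 1 := by
  have h2 : (1 - t) ≤ Real.exp (-t) := by linarith [Real.add_one_le_exp (-t)]
  calc Real.exp t * (1 - t) ≤ Real.exp t * Real.exp (-t) := by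
        nlinarith [Real.exp_pos t]
    _ = 1 := by rw [← Real.exp_add]; simp

private lemma aux_te {t M : ℝ} (h : t ≤ M) : |t * Real.exp t| ≤ 1 + |M| * Real.exp M := by
  have hM : (0:ℝ) ≤ |M| * Real.exp M := by positivity
  rcases le_or_gt t 0 with ht | ht
  · have h1 := aux_exp1 t
    have h2 : |t * Real.exp t| = -(t * Real.exp t) := by
      rw [abs_of_nonpos]
      exact mul_nonpos_of_nonpos_of_nonneg ht (Real.exp_pos t).le
    rw [h2]
    nlinarith [Real.exp_pos t]
  · have h2 : |t * Real.exp t| = t * Real.exp t := by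
      rw [abs_of_pos (mul_pos ht (Real.exp_pos t))]
    rw [h2]
    have h3 : Real.exp t ≤ Real.exp M := Real.exp_le_exp.mpr h
    nlinarith [le_abs_self M, Real.exp_pos t, ht.le.trans h]

private lemma aux_integrable_of_bdd {Y : Type*} [MeasurableSpace Y] {μ : Measure Y}
    [IsFiniteMeasure μ] {g : Y → ℝ} (hm : AEStronglyMeasurable g μ) (K : ℝ)
    (h : ∀ y, |g y| ≤ K) : Integrable g μ :=
  Integrable.mono' (integrable_const K) hm
    (Filter.Eventually.of_forall fun y => by simpa [Real.norm_eq_abs] using h y)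

private lemma aux_cont {X : Type*} [NormedAddCommGroup X] [NormedSpace ℝ X]
    [MeasurableSpace X] [OpensMeasurableSpace X] (ν : Measure X) [IsProbabilityMeasure ν]
    {v : X → X} (hv : Continuous v) {G : X → ℝ} (hG : Continuous G) (K : ℝ)
    (hK : ∀ y, |G y| ≤ K) : Continuous (fun x => ∫ z, G (z + v x) ∂ν) := by
  rw [continuous_iff_continuousAt]
  intro x₀
  apply MeasureTheory.tendsto_integral_filter_of_dominated_convergence (fun _ => K)
  · exact Filter.Eventually.of_forall fun x =>
      (hG.comp (continuous_id.add continuous_const)).aestronglyMeasurable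
  · exact Filter.Eventually.of_forall fun x => Filter.Eventually.of_forall fun z => by
      simpa [Real.norm_eq_abs] using hK (z + v x)
  · exact integrable_const K
  · exact Filter.Eventually.of_forall fun z =>
      ((hG.comp (continuous_const.add hv)).tendsto x₀)

private lemma aux_log_max {s t : ℝ} (hs : 0 < s) (ht : 0 < t) :
    Real.log (max s t) = max (Real.log s) (Real.log t) := by
  rcases le_total s t with h | h
  · rw [max_eq_right h, max_eq_right (Real.log_le_log hs h)]
  · rw [max_eq_left h, max_eq_left (Real.log_le_log ht h)]

/-- The Ruelle operator `(𝓛_A φ)(x) = ∫_{Ker T} e^{A(z + v_x)} φ(z + v_x) dν(z)`,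
where `ν` is the a priori probability measure (supported on `Ker T`) and `v x` is the
unique element of `E` with `T (v x) = x`. -/
noncomputable def ruelle {X : Type*} [NormedAddCommGroup X] [NormedSpace ℝ X]
    [MeasurableSpace X] (ν : Measure X) (v : X → X) (A φ : X → ℝ) (x : X) : ℝ :=
  ∫ z, Real.exp (A (z + v x)) * φ (z + v x) ∂ν

/-- The entropy `h_ν(μ) = inf { ∫ log (𝓛_0 u / u) dμ : u bounded continuous, u > 0 }`. -/
noncomputable def entropy {X : Type*} [NormedAddCommGroup X] [NormedSpace ℝ X]
    [MeasurableSpace X] (ν : Measure X) (v : X → X) (μ : Measure X) : ℝ :=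
  sInf { r : ℝ | ∃ u : X → ℝ, Continuous u ∧ (∃ C : ℝ, ∀ x, |u x| ≤ C) ∧ (∀ x, 0 < u x) ∧
    r = ∫ x, Real.log (ruelle ν v (fun _ => (0 : ℝ)) u x / u x) ∂μ }

/-- If `B` is continuous, bounded above, normalized (`𝓛_B 1 = 1`), and
`μ` is a `T`-invariant Borel probability measure with `B` `μ`-integrable satisfying the
duality `∫ 𝓛_B φ dμ = ∫ φ dμ` for every continuous `φ` for which both sides are defined
(in particular `𝓛_B^* μ = μ`), then `h_ν(μ) = -∫ B dμ`. -/
theorem stmt3 {X : Type*} [NormedAddCommGroup X] [NormedSpace ℝ X] [CompleteSpace X]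
    [MeasurableSpace X] [BorelSpace X]
    (T : X →L[ℝ] X) (hTsurj : Function.Surjective T) (hTinj : ¬ Function.Injective T)
    (hfd : FiniteDimensional ℝ (LinearMap.ker (T : X →ₗ[ℝ] X))) (hpos : 0 < Module.finrank ℝ (LinearMap.ker (T : X →ₗ[ℝ] X)))
    (E : ℕ → Submodule ℝ X)
    (hEclosed : ∀ n, 1 ≤ n → IsClosed ((E n : Set X)))
    (hEcompl : ∀ n, 1 ≤ n → IsCompl (LinearMap.ker ((T ^ n : X →L[ℝ] X) : X →ₗ[ℝ] X)) (E n))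
    (hEmap : ∀ n, 1 ≤ n → ∀ u ∈ E (n + 1), T u ∈ E n)
    (ν : Measure X) [IsProbabilityMeasure ν] (hνsupp : ν ((LinearMap.ker (T : X →ₗ[ℝ] X) : Set X)ᶜ) = 0)
    (v : X → X) (hv : ∀ x, v x ∈ E 1 ∧ T (v x) = x)
    (B : X → ℝ) (hBcont : Continuous B) (hBbdd : ∃ M : ℝ, ∀ x, B x ≤ M)
    (hBnorm : ∀ x, ruelle ν v B (fun _ => (1 : ℝ)) x = 1)
    (μ : Measure X) [IsProbabilityMeasure μ] (hinv : Measure.map T μ = μ)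
    (hint : Integrable B μ)
    (hdual : ∀ φ : X → ℝ, Continuous φ → Integrable φ μ →
      Integrable (fun x => ruelle ν v B φ x) μ →
      ∫ x, ruelle ν v B φ x ∂μ = ∫ x, φ x ∂μ) :
    entropy ν v μ = -∫ x, B x ∂μ := by
  obtain ⟨M, hM⟩ := hBbdd
  set K0 : ℝ := 1 + |M| * Real.exp M with hK0
  -- continuity of v
  have hvc : Continuous v := by
    have hE1c : IsClosed ((E 1 : Set X)) := hEclosed 1 le_rfl
    have hcompl : IsCompl (LinearMap.ker (T : X →ₗ[ℝ] X)) (E 1) := by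
      have := hEcompl 1 le_rfl; rwa [pow_one] at this
    haveI : CompleteSpace (E 1) := hE1c.completeSpace_coe
    set f0 : (E 1) →L[ℝ] X := T.comp (E 1).subtypeL with hf0
    have hf0app : ∀ y : E 1, f0 y = T (y : X) := fun y => rfl
    have hker : LinearMap.ker (f0 : (E 1) →ₗ[ℝ] X) = ⊥ := by
      rw [Submodule.eq_bot_iff]
      rintro ⟨y, hy⟩ hmem
      have hTy : T y = 0 := hmem
      have : y = 0 :=
        Submodule.disjoint_def.mp hcompl.disjoint y (LinearMap.mem_ker.mpr hTy) hy
      exact Subtype.ext this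
    have hrange : LinearMap.range (f0 : (E 1) →ₗ[ℝ] X) = ⊤ := by
      rw [Submodule.eq_top_iff']
      intro y
      obtain ⟨x, hx⟩ := hTsurj y
      have hx2 : x ∈ (LinearMap.ker (T : X →ₗ[ℝ] X)) ⊔ (E 1) := by rw [hcompl.sup_eq_top]; trivial
      obtain ⟨k, hk, e, he, hke⟩ := Submodule.mem_sup.mp hx2
      refine ⟨⟨e, he⟩, ?_⟩
      have hTk : T k = 0 := hk
      have : T e = y := by
        have : T (k + e) = y := by rw [hke, hx]
        rw [map_add, hTk, zero_add] at this
        exact this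
      simpa [hf0app] using this
    set e0 : (E 1) ≃L[ℝ] X := ContinuousLinearEquiv.ofBijective f0 hker hrange with he0
    have hveq : v = fun x => ((e0.symm x : X)) := by
      funext x
      have h2 : T ((e0.symm x : X)) = x := by
        have h3 : f0 (e0.symm x) = x := e0.apply_symm_apply x
        rw [← hf0app]; exact h3
      have hd : v x - (e0.symm x : X) = 0 := by
        apply Submodule.disjoint_def.mp hcompl.disjoint
        · exact LinearMap.mem_ker.mpr (by rw [map_sub, ContinuousLinearMap.coe_coe, (hv x).2, h2, sub_self])
        · exact Submodule.sub_mem _ (hv x).1 (e0.symm x).2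
      exact sub_eq_zero.mp hd
    rw [hveq]
    exact continuous_subtype_val.comp e0.symm.continuous
  -- basic integration helpers over ν
  have hmeasz : ∀ (G : X → ℝ), Continuous G → ∀ x : X,
      AEStronglyMeasurable (fun z => G (z + v x)) ν := fun G hG x =>
    (hG.comp (continuous_id.add continuous_const)).aestronglyMeasurable
  have hintz : ∀ (G : X → ℝ), Continuous G → ∀ (K : ℝ), (∀ y, |G y| ≤ K) → ∀ x : X,
      Integrable (fun z => G (z + v x)) ν := fun G hG K hK x =>
    aux_integrable_of_bdd (hmeasz G hG x) K (fun z => hK _)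
  -- normalization: ∫ e^{B} over fiber is 1
  have hBint1 : ∀ x, ∫ z, Real.exp (B (z + v x)) ∂ν = 1 := by
    intro x
    have := hBnorm x
    simpa [ruelle] using this
  have hexpBcont : Continuous fun y => Real.exp (B y) := Real.continuous_exp.comp hBcont
  have hexpBbdd : ∀ y, |Real.exp (B y)| ≤ Real.exp M := fun y => by
    rw [abs_of_pos (Real.exp_pos _)]; exact Real.exp_le_exp.mpr (hM y)
  have hBeBbdd : ∀ y, |Real.exp (B y) * B y| ≤ K0 := fun y => by
    rw [mul_comm]; exact aux_te (hM y)
  have hBeBcont : Continuous fun y => Real.exp (B y) * B y := hexpBcont.mul hBcont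
  -- |ruelle B ψ| bound helper
  have habs_ruelle : ∀ (ψ : X → ℝ) (K : ℝ), (∀ y, |Real.exp (B y) * ψ y| ≤ K) →
      ∀ x, |ruelle ν v B ψ x| ≤ K := by
    intro ψ K hK x
    have := norm_integral_le_of_norm_le_const (μ := ν)
      (f := fun z => Real.exp (B (z + v x)) * ψ (z + v x)) (C := K)
      (Filter.Eventually.of_forall fun z => by rw [Real.norm_eq_abs]; exact hK (z + v x))
    simpa [ruelle, Real.norm_eq_abs, measure_univ] using this
  -- Gibbs inequality: 0 ≤ 𝓛_B B pointwise
  have hgibbs : ∀ x, 0 ≤ ruelle ν v B B x := by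
    intro x
    have hi1 : Integrable (fun z => Real.exp (B (z + v x)) - 1) ν :=
      (hintz _ hexpBcont (Real.exp M) hexpBbdd x).sub (integrable_const 1)
    have hi2 : Integrable (fun z => Real.exp (B (z + v x)) * B (z + v x)) ν :=
      hintz _ hBeBcont K0 hBeBbdd x
    have hpt : ∀ z, Real.exp (B (z + v x)) - 1 ≤ Real.exp (B (z + v x)) * B (z + v x) := by
      intro z
      have := aux_exp1 (B (z + v x))
      nlinarith [Real.exp_pos (B (z + v x))]
    have h0 : (0:ℝ) = ∫ z, (Real.exp (B (z + v x)) - 1) ∂ν := by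
      rw [integral_sub (hintz _ hexpBcont (Real.exp M) hexpBbdd x) (integrable_const 1),
        hBint1 x, integral_const]
      simp
    rw [h0]
    exact integral_mono hi1 hi2 hpt
  -- 𝓛_B B is continuous and integrable
  have hLBBcont : Continuous fun x => ruelle ν v B B x :=
    aux_cont ν hvc hBeBcont K0 hBeBbdd
  have hLBBint : Integrable (fun x => ruelle ν v B B x) μ :=
    aux_integrable_of_bdd hLBBcont.aestronglyMeasurable K0 (habs_ruelle B K0 hBeBbdd)
  -- 0 ≤ ∫ B dμ
  have hI0 : 0 ≤ ∫ x, B x ∂μ := by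
    rw [← hdual B hBcont hint hLBBint]
    exact integral_nonneg hgibbs
  set I : ℝ := ∫ x, B x ∂μ with hI
  -- the set S
  set S : Set ℝ := { r : ℝ | ∃ u : X → ℝ, Continuous u ∧ (∃ C : ℝ, ∀ x, |u x| ≤ C) ∧
      (∀ x, 0 < u x) ∧
      r = ∫ x, Real.log (ruelle ν v (fun _ => (0 : ℝ)) u x / u x) ∂μ } with hS
  -- membership of -I
  have hmem : -I ∈ S := by
    refine ⟨fun x => Real.exp (B x), hexpBcont, ⟨Real.exp M, hexpBbdd⟩,
      fun x => Real.exp_pos _, ?_⟩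
    have hfun : (fun x => Real.log
        (ruelle ν v (fun _ => (0:ℝ)) (fun x => Real.exp (B x)) x / Real.exp (B x)))
        = fun x => -(B x) := by
      funext x
      have h1 : ruelle ν v (fun _ => (0:ℝ)) (fun y => Real.exp (B y)) x = 1 := by
        simp only [ruelle, Real.exp_zero, one_mul]
        exact hBint1 x
      rw [h1, one_div, Real.log_inv, Real.log_exp]
    rw [hfun, integral_neg]
  -- lower bound
  have hlb : ∀ r ∈ S, -I ≤ r := by
    rintro r ⟨u, huc, ⟨C, hC⟩, hupos, rfl⟩
    have hC' : ∀ x, u x ≤ C := fun x => (le_abs_self _).trans (hC x)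
    set a : X → ℝ := fun x => ∫ z, u (z + v x) ∂ν with ha
    have haeq : ∀ x, ruelle ν v (fun _ => (0:ℝ)) u x = a x := by
      intro x; simp only [ruelle, Real.exp_zero, one_mul, ha]
    have hu_int : ∀ x : X, Integrable (fun z => u (z + v x)) ν := hintz u huc C hC
    have ha_pos : ∀ x, 0 < a x := by
      intro x
      refine (integral_pos_iff_support_of_nonneg (fun z => (hupos _).le) (hu_int x)).mpr ?_
      have hsupp : Function.support (fun z => u (z + v x)) = Set.univ :=
        Set.eq_univ_of_forall fun z => (hupos _).ne'
      rw [hsupp]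
      simp
    have ha_leC : ∀ x, a x ≤ C := by
      intro x
      have h1 : a x ≤ ∫ _z, C ∂ν :=
        integral_mono (hu_int x) (integrable_const C) (fun z => hC' _)
      simpa using h1
    have ha_cont : Continuous a := aux_cont ν hvc huc C hC
    set g : X → ℝ := fun x => Real.log (a x) with hg
    set h : X → ℝ := fun x => Real.log (u x) with hh
    have hg_cont : Continuous g := ha_cont.log fun x => (ha_pos x).ne'
    have hh_cont : Continuous h := huc.log fun x => (hupos x).ne'
    set f : X → ℝ := fun x => Real.log (a x / u x) with hf
    have hfgh : ∀ x, f x = g x - h x := fun x => Real.log_div (ha_pos x).ne' (hupos x).ne'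
    have hieq : ∫ x, Real.log (ruelle ν v (fun _ => (0:ℝ)) u x / u x) ∂μ = ∫ x, f x ∂μ := by
      apply integral_congr_ae
      apply Filter.Eventually.of_forall
      intro x
      simp only [haeq, hf]
    rw [hieq]
    by_cases hfi : Integrable f μ
    case neg => rw [integral_undef hfi]; linarith
    refine le_of_forall_pos_le_add fun η hη => ?_
    set δ : ℝ := Real.exp η - 1 with hδdef
    have hδpos : 0 < δ := by
      have := Real.add_one_le_exp η
      simp only [hδdef]; linarith
    have hlog1δ : Real.log (1 + δ) = η := by
      rw [hδdef, show (1 + (Real.exp η - 1)) = Real.exp η by ring, Real.log_exp]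
    set qn : ℕ → X → ℝ := fun n x => max (h x) (-(n:ℝ)) with hqn
    set pn : ℕ → X → ℝ := fun n x => max (g x) (-(n:ℝ) - Real.log δ) with hpn
    set φn : ℕ → X → ℝ := fun n y => qn n y - B y with hφn
    have hq_b : ∀ (n : ℕ) (x : X), |qn n x| ≤ (n:ℝ) + |Real.log C| := by
      intro n x
      have hlogC : h x ≤ Real.log C := Real.log_le_log (hupos x) (hC' x)
      have hn0 : (0:ℝ) ≤ (n:ℝ) := Nat.cast_nonneg n
      have hmr := le_max_right (h x) (-(n:ℝ))
      rw [abs_le]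
      constructor
      · simp only [hqn]
        linarith [abs_nonneg (Real.log C)]
      · simp only [hqn]
        exact max_le (by linarith [le_abs_self (Real.log C)]) (by linarith [abs_nonneg (Real.log C)])
    have hp_b : ∀ (n : ℕ) (x : X), |pn n x| ≤ (n:ℝ) + |Real.log δ| + |Real.log C| := by
      intro n x
      have hlogC : g x ≤ Real.log C := Real.log_le_log (ha_pos x) (ha_leC x)
      have hn0 : (0:ℝ) ≤ (n:ℝ) := Nat.cast_nonneg n
      have hmr := le_max_right (g x) (-(n:ℝ) - Real.log δ)
      rw [abs_le]
      constructor
      · simp only [hpn]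
        linarith [le_abs_self (Real.log δ), abs_nonneg (Real.log C)]
      · simp only [hpn]
        refine max_le (by linarith [le_abs_self (Real.log C), abs_nonneg (Real.log δ)]) ?_
        linarith [neg_le_abs (Real.log δ), abs_nonneg (Real.log C), neg_nonpos_of_nonneg hn0]
    have hq_cont : ∀ n, Continuous (qn n) := fun n => by
      simp only [hqn]; exact hh_cont.max continuous_const
    have hp_cont : ∀ n, Continuous (pn n) := fun n => by
      simp only [hpn]; exact hg_cont.max continuous_const
    have hφ_cont : ∀ n, Continuous (φn n) := fun n => by
      simp only [hφn]; exact (hq_cont n).sub hBcont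
    have hq_int : ∀ n, Integrable (qn n) μ := fun n =>
      aux_integrable_of_bdd (hq_cont n).aestronglyMeasurable _ (hq_b n)
    have hp_int : ∀ n, Integrable (pn n) μ := fun n =>
      aux_integrable_of_bdd (hp_cont n).aestronglyMeasurable _ (hp_b n)
    have hφ_int : ∀ n, Integrable (φn n) μ := fun n => by
      have : Integrable (fun x => qn n x - B x) μ := (hq_int n).sub hint
      simpa only [hφn] using this
    have hGb : ∀ (n : ℕ) (y : X),
        |Real.exp (B y) * φn n y| ≤ Real.exp M * ((n:ℝ) + |Real.log C|) + K0 := by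
      intro n y
      have h1 : Real.exp (B y) * φn n y
          = Real.exp (B y) * qn n y - Real.exp (B y) * B y := by
        simp only [hφn]; ring
      rw [h1, sub_eq_add_neg]
      refine (abs_add_le _ _).trans ?_
      rw [abs_neg]
      have h2 : |Real.exp (B y) * qn n y| ≤ Real.exp M * ((n:ℝ) + |Real.log C|) := by
        rw [abs_mul, abs_of_pos (Real.exp_pos _)]
        exact mul_le_mul (Real.exp_le_exp.mpr (hM y)) (hq_b n y) (abs_nonneg _)
          (Real.exp_pos M).le
      linarith [hBeBbdd y]
    have hjen : ∀ (n : ℕ) (x : X),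
        ruelle ν v B (φn n) x ≤ Real.log (a x + Real.exp (-(n:ℝ))) := by
      intro n x
      set J : ℝ := ruelle ν v B (φn n) x with hJdef
      set ε : ℝ := Real.exp (-(n:ℝ)) with hεd
      have hεpos : 0 < ε := Real.exp_pos _
      have hε1 : ε ≤ 1 := by
        rw [hεd]
        exact Real.exp_le_one_iff.mpr (by simp [Nat.cast_nonneg])
      have hexpid : ∀ y : X, Real.exp (B y) * Real.exp (φn n y) = max (u y) ε := by
        intro y
        rw [← Real.exp_add]
        have h1 : B y + φn n y = max (Real.log (u y)) (-(n:ℝ)) := by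
          simp only [hφn, hqn, hh]; ring
        rw [h1, Real.exp_monotone.map_max, Real.exp_log (hupos y), hεd]
      have hWint : Integrable (fun z => Real.exp (B (z + v x))) ν :=
        hintz _ hexpBcont _ hexpBbdd x
      have hWφint : Integrable (fun z => Real.exp (B (z + v x)) * φn n (z + v x)) ν :=
        hintz (fun y => Real.exp (B y) * φn n y) (hexpBcont.mul (hφ_cont n)) _ (hGb n) x
      have hmaxb : ∀ y : X, |max (u y) ε| ≤ C + 1 := by
        intro y
        have hy1 : u y ≤ C := hC' y
        have hy2 : 0 < u y := hupos y
        rw [abs_of_pos (lt_of_lt_of_le hεpos (le_max_right _ _))]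
        apply max_le
        · linarith
        · linarith
      have hmaxint : Integrable (fun z => max (u (z + v x)) ε) ν :=
        hintz (fun y => max (u y) ε) (huc.max continuous_const) (C + 1) hmaxb x
      have hpt : ∀ z, Real.exp J * (Real.exp (B (z + v x))
          + Real.exp (B (z + v x)) * φn n (z + v x) - J * Real.exp (B (z + v x)))
          ≤ max (u (z + v x)) ε := by
        intro z
        have h1 := Real.add_one_le_exp (φn n (z + v x) - J)
        have h2 : Real.exp J * Real.exp (φn n (z + v x) - J) = Real.exp (φn n (z + v x)) := by
          rw [← Real.exp_add]; ring_nf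
        have h3 : (0:ℝ) < Real.exp (B (z + v x)) := Real.exp_pos _
        calc Real.exp J * (Real.exp (B (z + v x)) + Real.exp (B (z + v x)) * φn n (z + v x)
              - J * Real.exp (B (z + v x)))
            = (Real.exp J * Real.exp (B (z + v x))) * (1 + (φn n (z + v x) - J)) := by ring
          _ ≤ (Real.exp J * Real.exp (B (z + v x))) * Real.exp (φn n (z + v x) - J) := by
              apply mul_le_mul_of_nonneg_left (by linarith) (by positivity)
          _ = Real.exp (B (z + v x)) * (Real.exp J * Real.exp (φn n (z + v x) - J)) := by ring
          _ = Real.exp (B (z + v x)) * Real.exp (φn n (z + v x)) := by rw [h2]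
          _ = max (u (z + v x)) ε := hexpid (z + v x)
      have hsum : Integrable (fun z => Real.exp (B (z + v x))
          + Real.exp (B (z + v x)) * φn n (z + v x)) ν := hWint.add hWφint
      have hcm : Integrable (fun z => J * Real.exp (B (z + v x))) ν := hWint.const_mul J
      have hLHSint : Integrable (fun z => Real.exp (B (z + v x))
          + Real.exp (B (z + v x)) * φn n (z + v x) - J * Real.exp (B (z + v x))) ν :=
        hsum.sub hcm
      have hJint : ∫ z, Real.exp (B (z + v x)) * φn n (z + v x) ∂ν = J := rfl
      have hL : ∫ z, Real.exp J * (Real.exp (B (z + v x))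
          + Real.exp (B (z + v x)) * φn n (z + v x) - J * Real.exp (B (z + v x))) ∂ν
          = Real.exp J := by
        rw [integral_const_mul, integral_sub hsum hcm,
          integral_add hWint hWφint, integral_const_mul, hBint1 x, hJint]
        ring
      have hstep1 : Real.exp J ≤ ∫ z, max (u (z + v x)) ε ∂ν := by
        rw [← hL]
        exact integral_mono (hLHSint.const_mul (Real.exp J)) hmaxint hpt
      have hstep2 : ∫ z, max (u (z + v x)) ε ∂ν ≤ a x + ε := by
        have h4 : ∫ z, max (u (z + v x)) ε ∂ν ≤ ∫ z, (u (z + v x) + ε) ∂ν := by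
          refine integral_mono hmaxint ((hu_int x).add (integrable_const ε)) fun z => ?_
          exact max_le (le_add_of_nonneg_right hεpos.le) (le_add_of_nonneg_left (hupos _).le)
        rwa [integral_add (hu_int x) (integrable_const ε), integral_const, probReal_univ,
          one_smul] at h4
      exact (Real.le_log_iff_exp_le (add_pos (ha_pos x) hεpos)).mpr (hstep1.trans hstep2)
    have hR_cont : ∀ n, Continuous fun x => ruelle ν v B (φn n) x := fun n => by
      have := aux_cont ν hvc (hexpBcont.mul (hφ_cont n)) _ (hGb n)
      simpa only [ruelle, Pi.mul_apply] using this
    have hR_int : ∀ n, Integrable (fun x => ruelle ν v B (φn n) x) μ := fun n =>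
      aux_integrable_of_bdd (hR_cont n).aestronglyMeasurable _
        (habs_ruelle (φn n) _ (hGb n))
    have hdualn : ∀ n, ∫ x, ruelle ν v B (φn n) x ∂μ = (∫ x, qn n x ∂μ) - I := by
      intro n
      rw [hdual (φn n) (hφ_cont n) (hφ_int n) (hR_int n)]
      have h1 : ∫ x, (qn n x - B x) ∂μ = (∫ x, qn n x ∂μ) - ∫ x, B x ∂μ :=
        integral_sub (hq_int n) hint
      simpa only [hφn, hI] using h1
    have hLn_cont : ∀ n : ℕ, Continuous fun x => Real.log (a x + Real.exp (-(n:ℝ))) :=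
      fun n => (ha_cont.add continuous_const).log
        fun x => (add_pos (ha_pos x) (Real.exp_pos _)).ne'
    have hLn_b : ∀ (n : ℕ) (x : X),
        |Real.log (a x + Real.exp (-(n:ℝ)))| ≤ (n:ℝ) + |Real.log (C+1)| := by
      intro n x
      have hεpos : (0:ℝ) < Real.exp (-(n:ℝ)) := Real.exp_pos _
      have hε1 : Real.exp (-(n:ℝ)) ≤ 1 := Real.exp_le_one_iff.mpr (by simp [Nat.cast_nonneg])
      have hn0 : (0:ℝ) ≤ (n:ℝ) := Nat.cast_nonneg n
      rw [abs_le]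
      constructor
      · have h1 : Real.log (Real.exp (-(n:ℝ))) ≤ Real.log (a x + Real.exp (-(n:ℝ))) :=
          Real.log_le_log hεpos (le_add_of_nonneg_left (ha_pos x).le)
        rw [Real.log_exp] at h1
        linarith [abs_nonneg (Real.log (C+1))]
      · have h2 : Real.log (a x + Real.exp (-(n:ℝ))) ≤ Real.log (C + 1) :=
          Real.log_le_log (add_pos (ha_pos x) hεpos) (by linarith [ha_leC x])
        linarith [le_abs_self (Real.log (C+1))]
    have hLn_int : ∀ n : ℕ, Integrable (fun x => Real.log (a x + Real.exp (-(n:ℝ)))) μ :=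
      fun n => aux_integrable_of_bdd (hLn_cont n).aestronglyMeasurable _ (hLn_b n)
    have hIneq1 : ∀ n : ℕ, (∫ x, qn n x ∂μ) - I
        ≤ ∫ x, Real.log (a x + Real.exp (-(n:ℝ))) ∂μ := fun n => by
      rw [← hdualn n]
      exact integral_mono (hR_int n) (hLn_int n) (hjen n)
    have hD3 : ∀ (n : ℕ) (x : X),
        Real.log (a x + Real.exp (-(n:ℝ))) ≤ η + pn n x := by
      intro n x
      set ε : ℝ := Real.exp (-(n:ℝ)) with hεd
      have hεpos : 0 < ε := Real.exp_pos _
      have key : a x + ε ≤ (1 + δ) * max (a x) (ε / δ) := by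
        rcases le_total (ε / δ) (a x) with hle | hle
        · rw [max_eq_left hle]
          have h1 : ε ≤ a x * δ := (div_le_iff₀ hδpos).mp hle
          nlinarith
        · rw [max_eq_right hle]
          have h2 : (1 + δ) * (ε / δ) = ε / δ + ε := by field_simp
          linarith
      have hmaxpos : 0 < max (a x) (ε / δ) := lt_of_lt_of_le (ha_pos x) (le_max_left _ _)
      have hlogεδ : Real.log (ε / δ) = -(n:ℝ) - Real.log δ := by
        rw [hεd, Real.log_div (Real.exp_ne_zero _) hδpos.ne', Real.log_exp]
      calc Real.log (a x + ε) ≤ Real.log ((1 + δ) * max (a x) (ε / δ)) :=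
            Real.log_le_log (add_pos (ha_pos x) hεpos) key
        _ = Real.log (1 + δ) + Real.log (max (a x) (ε / δ)) :=
            Real.log_mul (by positivity) hmaxpos.ne'
        _ = η + max (Real.log (a x)) (Real.log (ε / δ)) := by
            rw [hlog1δ, aux_log_max (ha_pos x) (div_pos hεpos hδpos)]
        _ = η + pn n x := by
            rw [hlogεδ]
    have hIneq2 : ∀ n : ℕ, ∫ x, Real.log (a x + Real.exp (-(n:ℝ))) ∂μ
        ≤ η + ∫ x, pn n x ∂μ := fun n => by
      have h1 : ∫ x, Real.log (a x + Real.exp (-(n:ℝ))) ∂μ ≤ ∫ x, (η + pn n x) ∂μ :=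
        integral_mono (hLn_int n) ((integrable_const η).add (hp_int n)) (hD3 n)
      rwa [integral_add (integrable_const η) (hp_int n), integral_const, probReal_univ,
        one_smul] at h1
    have hIneqn : ∀ n : ℕ, -I - η ≤ ∫ x, (pn n x - qn n x) ∂μ := fun n => by
      have h1 := (hIneq1 n).trans (hIneq2 n)
      rw [integral_sub (hp_int n) (hq_int n)]
      linarith
    have hDCT : Tendsto (fun n => ∫ x, (pn n x - qn n x) ∂μ) atTop (nhds (∫ x, f x ∂μ)) := by
      apply MeasureTheory.tendsto_integral_of_dominated_convergence
        (fun x => |f x| + |Real.log δ|)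
      · exact fun n => ((hp_cont n).sub (hq_cont n)).aestronglyMeasurable
      · exact hfi.abs.add (integrable_const _)
      · intro n
        refine Filter.Eventually.of_forall fun x => ?_
        rw [Real.norm_eq_abs]
        have e1 : |pn n x - max (h x) (-(n:ℝ) - Real.log δ)| ≤ |g x - h x| := by
          simp only [hpn]
          exact abs_max_sub_max_le_abs _ _ _
        have e2 : |max (h x) (-(n:ℝ) - Real.log δ) - qn n x| ≤ |Real.log δ| := by
          simp only [hqn]
          rw [max_comm (h x) (-(n:ℝ) - Real.log δ), max_comm (h x) (-(n:ℝ))]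
          refine (abs_max_sub_max_le_abs _ _ _).trans ?_
          have h5 : (-(n:ℝ) - Real.log δ) - (-(n:ℝ)) = -Real.log δ := by ring
          rw [h5, abs_neg]
        calc |pn n x - qn n x|
            ≤ |pn n x - max (h x) (-(n:ℝ) - Real.log δ)|
              + |max (h x) (-(n:ℝ) - Real.log δ) - qn n x| := abs_sub_le _ _ _
          _ ≤ |g x - h x| + |Real.log δ| := add_le_add e1 e2
          _ = |f x| + |Real.log δ| := by rw [hfgh x]
      · refine Filter.Eventually.of_forall fun x => ?_
        obtain ⟨N, hN⟩ := exists_nat_ge (max (-(h x)) (-(g x) - Real.log δ))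
        refine Filter.Tendsto.congr' ?_ tendsto_const_nhds
        filter_upwards [eventually_ge_atTop N] with n hn
        have hnn : (N:ℝ) ≤ (n:ℝ) := Nat.cast_le.mpr hn
        have h1 : -(n:ℝ) ≤ h x := by
          have := (le_max_left (-(h x)) (-(g x) - Real.log δ)).trans hN
          linarith
        have h2 : -(n:ℝ) - Real.log δ ≤ g x := by
          have := (le_max_right (-(h x)) (-(g x) - Real.log δ)).trans hN
          linarith
        show f x = pn n x - qn n x
        rw [hfgh x]
        simp only [hpn, hqn]
        rw [max_eq_left h2, max_eq_left h1]
    have hfinal : -I - η ≤ ∫ x, f x ∂μ :=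
      ge_of_tendsto hDCT (Filter.Eventually.of_forall hIneqn)
    linarith
  have hbdd : BddBelow S := ⟨-I, fun r hr => hlb r hr⟩
  have : sInf S = -I := le_antisymm (csInf_le hbdd hmem) (le_csInf ⟨-I, hmem⟩ hlb)
  simpa [entropy, ← hS] using this
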